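/- Let N ≥ 1 be an integer, B, D : ℤ → ℝ with D 0 = 0 and B N = 0, λ : ℕ → ℝ with λ 0 = 0, and f : ℕ → ℤ → ℝ such that for every n ∈ ℕ and every integer x with 0 ≤ x ≤ N: B x · (f n x - f n (x+1)) + D x · (f n x - f n (x-1)) = λ n · f n x. Assume f 0 x ≠ 0 for all 0 ≤ x ≤ N. Define Q : ℤ → ℕ → ℝ by Q x n = f n x / f 0 x if 0 ≤ x ≤ N and Q x n = 0 otherwise; define Â x = -B x · f 0 (x+1) / f 0 x for 0 ≤ x ≤ N-1 and Â N = 0; and define Ĉ x = -D x · f 0 (x-1) / f 0 x for 1 ≤ x ≤ N and Ĉ 0 = 0. Then for every n ∈ ℕ and every 0 ≤ x ≤ N: λ n · Q x n = Â x · Q (x+1) n + (B x + D x) · Q x n + Ĉ x · Q (x-1) n, and moreover B x + D x = -Â x - Ĉ x. -/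

import Mathlib

theorem dual_three_term_recurrence (N : ℤ) (hN : 1 ≤ N)
    (B D : ℤ → ℝ) (hD0 : D 0 = 0) (hBN : B N = 0)
    (lam : ℕ → ℝ) (hlam0 : lam 0 = 0)
    (f : ℕ → ℤ → ℝ)
    (heq : ∀ (n : ℕ) (x : ℤ), 0 ≤ x → x ≤ N →
      B x * (f n x - f n (x + 1)) + D x * (f n x - f n (x - 1)) = lam n * f n x)
    (hf0 : ∀ x : ℤ, 0 ≤ x → x ≤ N → f 0 x ≠ 0)
    (Q : ℤ → ℕ → ℝ)
    (hQ : ∀ (x : ℤ) (n : ℕ), Q x n = if 0 ≤ x ∧ x ≤ N then f n x / f 0 x else 0)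
    (Ahat : ℤ → ℝ)
    (hAhat : ∀ x : ℤ, 0 ≤ x → x ≤ N - 1 → Ahat x = -B x * f 0 (x + 1) / f 0 x)
    (hAhatN : Ahat N = 0)
    (Chat : ℤ → ℝ)
    (hChat : ∀ x : ℤ, 1 ≤ x → x ≤ N → Chat x = -D x * f 0 (x - 1) / f 0 x)
    (hChat0 : Chat 0 = 0) :
    ∀ (n : ℕ) (x : ℤ), 0 ≤ x → x ≤ N →
      lam n * Q x n
          = Ahat x * Q (x + 1) n + (B x + D x) * Q x n + Chat x * Q (x - 1) n
        ∧ B x + D x = -Ahat x - Chat x := by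
  intro n x hx0 hxN
  have hfx := hf0 x hx0 hxN
  have hQx : Q x n = f n x / f 0 x := by rw [hQ, if_pos ⟨hx0, hxN⟩]
  have hA' : Ahat x = -(B x * f 0 (x + 1)) / f 0 x := by
    by_cases hxe : x = N
    · subst hxe; rw [hAhatN, hBN]; ring
    · rw [hAhat x hx0 (by omega)]; ring
  have hC' : Chat x = -(D x * f 0 (x - 1)) / f 0 x := by
    by_cases hxe : x = 0
    · subst hxe; rw [hChat0, hD0]; ring
    · rw [hChat x (by omega) hxN]; ring
  have hA : Ahat x * Q (x + 1) n = -(B x * f n (x + 1)) / f 0 x := by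
    by_cases hxe : x = N
    · subst hxe
      rw [hAhatN, hBN, hQ, if_neg (by omega)]; ring
    · have hfx1 := hf0 (x + 1) (by omega) (by omega)
      rw [hA', hQ, if_pos ⟨by omega, by omega⟩]
      field_simp
  have hC : Chat x * Q (x - 1) n = -(D x * f n (x - 1)) / f 0 x := by
    by_cases hxe : x = 0
    · subst hxe
      rw [hChat0, hD0, hQ, if_neg (by omega)]; ring
    · have hfx1 := hf0 (x - 1) (by omega) (by omega)
      rw [hC', hQ, if_pos ⟨by omega, by omega⟩]
      field_simp
  constructor
  · rw [hQx, hA, hC]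
    linear_combination -(heq n x hx0 hxN) / f 0 x
  · have h0 := heq 0 x hx0 hxN
    rw [hlam0] at h0
    rw [hA', hC']
    field_simp
    linear_combination h0
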